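/- arXiv:2211.05173 — 6 statements merged into one kernel-verified Lean document; each statement's English description precedes it below -/
import Mathlib

section
/- For every closure operator μ on the power set of a finite set U, the collection of keys of μ (minimal sets K with respect to inclusion such that Kμ equals a given closed set) is a hereditary collection: every subset of a key is a key. -/
open Set

variable {U : Type*}

/-- A closure operator on the power set of `U`: inclusion, monotonicity, idempotence. -/
def IsClosure (μ : Set U → Set U) : Prop :=
  (∀ X, X ⊆ μ X) ∧ (∀ X Y : Set U, X ⊆ Y → μ X ⊆ μ Y) ∧ (∀ X, μ (μ X) = μ X)

/-- `K` is a key of `μ`: no proper subset of `K` has the same closure. -/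
def IsKey (μ : Set U → Set U) (K : Set U) : Prop :=
  ∀ S : Set U, S ⊂ K → μ S ≠ μ K

/-- One step of the Extension-by-Closure recurrence for a set of pairs `α`. -/
def ecStep (α : Set (Set U × Set U)) (X : Set U) : Set U :=
  X ∪ ⋃ p ∈ {q ∈ α | q.1 ⊆ X}, p.2

/-- The iterates `Xα_t` of the Extension-by-Closure recurrence. -/
def ecIter (α : Set (Set U × Set U)) (X : Set U) : ℕ → Set U
  | 0 => X
  | n + 1 => ecStep α (ecIter α X n)

/-- `Xα⁺`: the eventual stable value of the increasing recurrence
(for finite `U` the union over all iterates is the stable limit). -/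
def extC (α : Set (Set U × Set U)) : Set U → Set U :=
  fun X => ⋃ n, ecIter α X n

/-- The closure `μ` viewed as a set of pairs `(X, Xμ)`. -/
def graphOf (μ : Set U → Set U) : Set (Set U × Set U) :=
  {p | p.2 = μ p.1}

/-- `α` is a cover of `μ`: a subset of `μ` (as pairs) with `α⁺ = μ`. -/
def IsCover (μ : Set U → Set U) (α : Set (Set U × Set U)) : Prop :=
  α ⊆ graphOf μ ∧ extC α = μ

theorem keys_hereditary [Finite U] (μ : Set U → Set U) (hμ : IsClosure μ)
    (K Y : Set U) (hK : IsKey μ K) (hYK : Y ⊆ K) : IsKey μ Y := by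
  obtain ⟨hincl, hmono, hidem⟩ := hμ
  intro S hS hSY
  set T := S ∪ (K \ Y) with hT
  have hTK : T ⊆ K := by
    intro x hx
    rcases hx with hx | hx
    · exact hYK (hS.1 hx)
    · exact hx.1
  -- T is a proper subset of K
  obtain ⟨y, hyY, hyS⟩ := Set.exists_of_ssubset hS
  have hTssK : T ⊂ K := by
    refine ⟨hTK, fun hKT => ?_⟩
    have := hKT (hYK hyY)
    rcases this with h | h
    · exact hyS h
    · exact h.2 hyY
  apply hK T hTssK
  apply subset_antisymm (hmono _ _ hTK)
  have hKsub : K ⊆ μ T := by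
    intro x hx
    by_cases hxY : x ∈ Y
    · have : x ∈ μ S := hSY ▸ hincl Y hxY
      exact hmono S T Set.subset_union_left this
    · exact hincl T (Or.inr ⟨hx, hxY⟩)
  calc μ K ⊆ μ (μ T) := hmono _ _ hKsub
    _ = μ T := hidem T
end

section
/- Let μ be a closure operator on 2^U with U finite, and let α be the restriction of μ to its keys, i.e., α = {(K, Kμ) | K a key of μ}. Then the extension by closure α⁺ equals μ: for every X ⊆ U, Xα⁺ = Xμ. -/
open Set

variable {U : Type*}

lemma exists_key [Finite U] (μ : Set U → Set U) (X : Set U) :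
    ∃ K, K ⊆ X ∧ IsKey μ K ∧ μ K = μ X := by
  have hfin : ({S | S ⊆ X ∧ μ S = μ X} : Set (Set U)).Finite := Set.toFinite _
  obtain ⟨m, hm, hmin⟩ : ∃ m ∈ {S | S ⊆ X ∧ μ S = μ X}, ∀ a ∈ {S | S ⊆ X ∧ μ S = μ X}, id a ≤ id m → id m = id a := by
    obtain ⟨m, hm, hmin⟩ := hfin.exists_minimalFor id _ ⟨X, Subset.rfl, rfl⟩
    exact ⟨m, hm, fun a ha h => le_antisymm (hmin ha h) h⟩
  refine ⟨m, hm.1, ?_, hm.2⟩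
  intro T hT hTm
  have : T ∈ {S | S ⊆ X ∧ μ S = μ X} := ⟨hT.subset.trans hm.1, hTm.trans hm.2⟩
  exact hT.ne (hmin _ this hT.subset).symm

theorem extC_of_key_restriction [Finite U] (μ : Set U → Set U) (hμ : IsClosure μ) :
    extC {p : Set U × Set U | p.2 = μ p.1 ∧ IsKey μ p.1} = μ := by
  obtain ⟨h1, h2, h3⟩ := hμ
  funext X
  apply subset_antisymm
  · apply iUnion_subset
    intro n
    induction n with
    | zero => exact h1 X
    | succ n ih =>
      apply union_subset ih
      simp only [iUnion_subset_iff]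
      rintro ⟨S, T⟩ ⟨⟨hT, -⟩, hS⟩
      simp only at hT hS ⊢
      rw [hT]
      calc μ S ⊆ μ (μ X) := h2 _ _ (hS.trans ih)
        _ = μ X := h3 X
  · obtain ⟨K, hKX, hkey, hKμ⟩ := exists_key μ X
    refine subset_trans ?_ (subset_iUnion _ 1)
    show μ X ⊆ ecStep _ X
    intro x hx
    refine mem_union_right _ ?_
    exact mem_biUnion (show (K, μ K) ∈ _ from ⟨⟨rfl, hkey⟩, hKX⟩) (hKμ ▸ hx)
end

section
/- Let μ be a closure operator on 2^U with U finite, and let α ⊆ μ be a cover of μ (meaning α⁺ = μ). If β ⊆ α is redundant (some pair (S,Sμ) ∈ β satisfies (β \ {(S,Sμ)})⁺ = β⁺), then α itself is redundant: there is a pair (X,Xμ) ∈ α with (α \ {(X,Xμ)})⁺ = α⁺. -/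
open Set

variable {U : Type*}

/-- `α` is redundant: some single pair can be removed without changing `α⁺`. -/
def Redundant (α : Set (Set U × Set U)) : Prop :=
  ∃ p ∈ α, extC (α \ {p}) = extC α

lemma subset_ecStep {γ : Set (Set U × Set U)} {X : Set U} {q : Set U × Set U}
    (hq : q ∈ γ) (h1 : q.1 ⊆ X) : q.2 ⊆ ecStep γ X := fun x hx =>
  Or.inr (mem_iUnion₂.mpr ⟨q, ⟨hq, h1⟩, hx⟩)

lemma ecIter_mono_nat (γ : Set (Set U × Set U)) (X : Set U) :
    Monotone (ecIter γ X) := by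
  apply monotone_nat_of_le_succ
  intro n
  exact subset_union_left

lemma subset_extC (γ : Set (Set U × Set U)) (X : Set U) : X ⊆ extC γ X :=
  subset_iUnion (ecIter γ X) 0

lemma extC_mono_left {γ δ : Set (Set U × Set U)} (h : γ ⊆ δ) (X : Set U) :
    extC γ X ⊆ extC δ X := by
  apply iUnion_mono
  intro n
  induction n with
  | zero => exact subset_rfl
  | succ n ih =>
    apply union_subset (ih.trans subset_union_left)
    apply iUnion₂_subset
    rintro q ⟨hq, hq1⟩
    exact subset_ecStep (h hq) (hq1.trans ih)

lemma extC_closed [Finite U] (γ : Set (Set U × Set U)) (X : Set U)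
    {q : Set U × Set U} (hq : q ∈ γ) (h1 : q.1 ⊆ extC γ X) : q.2 ⊆ extC γ X := by
  obtain ⟨I, Ifin, hI⟩ := finite_subset_iUnion (Set.toFinite q.1) h1
  have : q.1 ⊆ ecIter γ X (Ifin.toFinset.sup id) := by
    intro x hx
    obtain ⟨i, hi, hxi⟩ := mem_iUnion₂.mp (hI hx)
    exact ecIter_mono_nat γ X (Finset.le_sup (f := id) (Ifin.mem_toFinset.mpr hi)) hxi
  have : q.2 ⊆ ecIter γ X (Ifin.toFinset.sup id + 1) := subset_ecStep hq this
  exact this.trans (subset_iUnion (ecIter γ X) _)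

lemma extC_trans [Finite U] (γ : Set (Set U × Set U)) {S X : Set U}
    (h : S ⊆ extC γ X) : extC γ S ⊆ extC γ X := by
  apply iUnion_subset
  intro n
  induction n with
  | zero => exact h
  | succ n ih =>
    apply union_subset ih
    apply iUnion₂_subset
    rintro q ⟨hq, hq1⟩
    exact extC_closed γ X hq (hq1.trans ih)

theorem redundant_subset_redundant_cover [Finite U] (μ : Set U → Set U)
    (hμ : IsClosure μ) (α β : Set (Set U × Set U)) (hα : IsCover μ α)
    (hβα : β ⊆ α) (hβ : Redundant β) : Redundant α := by
  obtain ⟨p, hpβ, hp⟩ := hβ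
  refine ⟨p, hβα hpβ, ?_⟩
  funext X
  apply Subset.antisymm (extC_mono_left diff_subset X)
  -- p.2 is derivable from β \ {p} from p.1
  have hp2β : p.2 ⊆ extC (β \ {p}) p.1 := by
    rw [hp]
    have h1 : p.2 ⊆ ecIter β p.1 1 := subset_ecStep hpβ subset_rfl
    exact h1.trans (subset_iUnion (ecIter β p.1) 1)
  have hp2 : p.2 ⊆ extC (α \ {p}) p.1 :=
    hp2β.trans (extC_mono_left (diff_subset_diff_left hβα) p.1)
  apply iUnion_subset
  intro n
  induction n with
  | zero => exact subset_extC _ X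
  | succ n ih =>
    apply union_subset ih
    apply iUnion₂_subset
    rintro q ⟨hq, hq1⟩
    by_cases hqp : q = p
    · subst hqp
      exact hp2.trans (extC_trans _ (hq1.trans ih))
    · exact extC_closed _ X ⟨hq, hqp⟩ (hq1.trans ih)
end

section
/- Let μ be a closure operator on 2^U (U finite), C a closed set of μ, and α ⊆ μ a cover of μ (α⁺ = μ). Then the body restriction α_{⊆C} = {(S,Sμ) ∈ α | Sμ ⊆ C} satisfies (α_{⊆C})⁺ = μ_{⊆C}, where μ_{⊆C} = {(X,Xμ) ∈ μ | X ⊆ C} regarded as a closure operator on 2^C. -/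
open Set

variable {U : Type*}

theorem body_restriction_covers [Finite U] (μ : Set U → Set U) (hμ : IsClosure μ)
    (C : Set U) (hC : μ C = C) (α : Set (Set U × Set U)) (hα : IsCover μ α) :
    ∀ X ⊆ C, extC {p ∈ α | p.2 ⊆ C} X = μ X := by
  obtain ⟨hincl, hmono, hidem⟩ := hμ
  obtain ⟨hsub, hext⟩ := hα
  intro X hXC
  have hμXC : μ X ⊆ C := hC ▸ hmono X C hXC
  have key : ∀ n, ecIter α X n ⊆ μ X ∧ ecIter {p ∈ α | p.2 ⊆ C} X n = ecIter α X n := by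
    intro n
    induction n with
    | zero => exact ⟨hincl X, rfl⟩
    | succ n ih =>
      obtain ⟨hS, heq⟩ := ih
      have pairs : {q ∈ α | q.1 ⊆ ecIter α X n} = {q ∈ {p ∈ α | p.2 ⊆ C} | q.1 ⊆ ecIter α X n} := by
        ext q
        simp only [Set.mem_setOf_eq]
        constructor
        · rintro ⟨hqα, hq1⟩
          have : q.2 = μ q.1 := hsub hqα
          have hq2 : q.2 ⊆ μ X := by
            rw [this]
            calc μ q.1 ⊆ μ (μ X) := hmono _ _ (hq1.trans hS)
              _ = μ X := hidem X
          exact ⟨⟨hqα, hq2.trans hμXC⟩, hq1⟩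
        · rintro ⟨⟨hqα, _⟩, hq1⟩; exact ⟨hqα, hq1⟩
      constructor
      · show ecStep α (ecIter α X n) ⊆ μ X
        apply Set.union_subset hS
        refine Set.iUnion₂_subset ?_
        rintro q ⟨hqα, hq1⟩
        rw [hsub hqα]
        calc μ q.1 ⊆ μ (μ X) := hmono _ _ (hq1.trans hS)
          _ = μ X := hidem X
      · show ecStep _ _ = ecStep _ _
        unfold ecStep
        rw [heq, ← pairs]
  have : extC {p ∈ α | p.2 ⊆ C} X = extC α X := by
    unfold extC
    exact Set.iUnion_congr fun n => (key n).2
  rw [this, hext]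
end

section
/- Let μ be a closure operator on 2^U (U finite), C a closed set, and α ⊆ μ a cover of μ. Then the interior restriction α_{⊂C} = {(S,Sμ) ∈ α | Sμ ⊊ C} satisfies (α_{⊂C})⁺ = (μ_{⊂C})⁺, where μ_{⊂C} = {(X,Xμ) ∈ μ | Xμ ⊊ C}. In particular, the closure generated by the interior of a cover is independent of the choice of cover. -/
open Set

variable {U : Type*}

section Aux

variable {α β : Set (Set U × Set U)} {X Y W : Set U}

lemma subset_ecStep_s13 : X ⊆ ecStep α X := subset_union_left

lemma ecStep_mono (h : X ⊆ Y) : ecStep α X ⊆ ecStep α Y := by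
  intro x hx
  simp only [ecStep, mem_union, mem_iUnion, mem_sep_iff, exists_prop] at hx ⊢
  rcases hx with hx | ⟨p, ⟨hp1, hp2⟩, hp3⟩
  · exact Or.inl (h hx)
  · exact Or.inr ⟨p, ⟨hp1, hp2.trans h⟩, hp3⟩

lemma ecStep_mono_set (h : α ⊆ β) : ecStep α X ⊆ ecStep β X := by
  intro x hx
  simp only [ecStep, mem_union, mem_iUnion, mem_sep_iff, exists_prop] at hx ⊢
  rcases hx with hx | ⟨p, ⟨hp1, hp2⟩, hp3⟩
  · exact Or.inl hx
  · exact Or.inr ⟨p, ⟨h hp1, hp2⟩, hp3⟩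

lemma ecIter_mono_left (h : X ⊆ Y) : ∀ n, ecIter α X n ⊆ ecIter α Y n
  | 0 => h
  | n + 1 => ecStep_mono (ecIter_mono_left h n)

lemma ecIter_mono_set (h : α ⊆ β) : ∀ n, ecIter α X n ⊆ ecIter β X n
  | 0 => subset_rfl
  | n + 1 => (ecStep_mono (ecIter_mono_set h n)).trans (ecStep_mono_set h)

lemma ecIter_monotone : Monotone (ecIter α X) := by
  apply monotone_nat_of_le_succ
  intro n
  exact subset_ecStep_s13

lemma subset_extC_s13 : X ⊆ extC α X := subset_iUnion (ecIter α X) 0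

lemma extC_mono (h : X ⊆ Y) : extC α X ⊆ extC α Y :=
  iUnion_mono fun n => ecIter_mono_left h n

lemma extC_mono_set (h : α ⊆ β) : extC α X ⊆ extC β X :=
  iUnion_mono fun n => ecIter_mono_set h n

lemma extC_of_fixed (h : ecStep α W = W) : extC α W = W := by
  have : ∀ n, ecIter α W n = W := by
    intro n; induction n with
    | zero => rfl
    | succ n ih => rw [ecIter, ih, h]
  simp [extC, this, iUnion_const]

lemma extC_eq_iter [Finite U] : ∃ n, extC α X = ecIter α X n ∧
    ecStep α (ecIter α X n) = ecIter α X n := by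
  have : ∃ n, ecIter α X (n + 1) = ecIter α X n := by
    by_contra h
    push_neg at h
    have hsm : StrictMono (ecIter α X) := by
      apply strictMono_nat_of_lt_succ
      intro n
      exact lt_of_le_of_ne (ecIter_monotone (Nat.le_succ n)) (Ne.symm (h n))
    obtain ⟨a, b, hab, he⟩ := Finite.exists_ne_map_eq_of_infinite (ecIter α X)
    exact hab (hsm.injective he)
  obtain ⟨n, hn⟩ := this
  have hstab : ∀ m, ecIter α X m ⊆ ecIter α X n := by
    intro m
    rcases le_or_gt m n with hmn | hmn
    · exact ecIter_monotone hmn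
    · have : ∀ k, ecIter α X (n + k) = ecIter α X n := by
        intro k; induction k with
        | zero => rfl
        | succ k ih =>
          show ecStep α (ecIter α X (n + k)) = ecIter α X n
          rw [ih]; exact hn
      rw [show m = n + (m - n) by omega, this]
  refine ⟨n, ?_, hn⟩
  exact le_antisymm (iUnion_subset hstab) (subset_iUnion _ n)

lemma extC_idem [Finite U] : extC α (extC α X) = extC α X := by
  obtain ⟨n, hn, hfix⟩ := extC_eq_iter (α := α) (X := X)
  rw [hn, extC_of_fixed hfix]

end Aux

lemma core_eq [Finite U] (μ : Set U → Set U) (hμ : IsClosure μ) (C : Set U)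
    (α : Set (Set U × Set U)) (hα : IsCover μ α) (S : Set U) (hS : μ S ⊂ C) :
    ∀ n, ecIter {p ∈ α | p.2 ⊂ C} S n = ecIter α S n := by
  have hsub : ∀ n, ecIter α S n ⊆ μ S := by
    intro n
    have : extC α S = μ S := congrFun hα.2 S
    exact this ▸ subset_iUnion (ecIter α S) n
  intro n
  induction n with
  | zero => rfl
  | succ n ih =>
    rw [ecIter, ecIter, ih]
    unfold ecStep
    have hset : {q ∈ {p ∈ α | p.2 ⊂ C} | q.1 ⊆ ecIter α S n} = {q ∈ α | q.1 ⊆ ecIter α S n} := by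
      ext q
      simp only [mem_setOf_eq, mem_sep_iff]
      constructor
      · rintro ⟨⟨h1, _⟩, h2⟩; exact ⟨h1, h2⟩
      · rintro ⟨h1, h2⟩
        have hq2 : q.2 = μ q.1 := hα.1 h1
        have : q.2 ⊆ μ S := by
          rw [hq2]
          calc μ q.1 ⊆ μ (μ S) := hμ.2.1 _ _ (h2.trans (hsub n))
          _ = μ S := hμ.2.2 S
        exact ⟨⟨h1, lt_of_le_of_lt this hS⟩, h2⟩
    rw [hset]

lemma core_extC [Finite U] (μ : Set U → Set U) (hμ : IsClosure μ) (C : Set U)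
    (α : Set (Set U × Set U)) (hα : IsCover μ α) (S : Set U) (hS : μ S ⊂ C) :
    extC {p ∈ α | p.2 ⊂ C} S = μ S := by
  have : extC {p ∈ α | p.2 ⊂ C} S = extC α S := by
    unfold extC
    exact iUnion_congr (core_eq μ hμ C α hα S hS)
  rw [this, congrFun hα.2 S]

theorem interior_closure_cover_independent [Finite U] (μ : Set U → Set U)
    (hμ : IsClosure μ) (C : Set U) (hC : μ C = C)
    (α : Set (Set U × Set U)) (hα : IsCover μ α) :
    extC {p ∈ α | p.2 ⊂ C} = extC {p ∈ graphOf μ | p.2 ⊂ C} := by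
  have hcov : IsCover μ (graphOf μ) := by
    refine ⟨subset_rfl, ?_⟩
    funext X
    apply le_antisymm
    · -- extC (graphOf μ) X ⊆ μ X
      refine iUnion_subset fun n => ?_
      induction n with
      | zero => exact hμ.1 X
      | succ n ih =>
        rw [ecIter]
        apply union_subset ih
        refine iUnion₂_subset fun q hq => ?_
        rw [hq.1]
        calc μ q.1 ⊆ μ (μ X) := hμ.2.1 _ _ (hq.2.trans ih)
        _ = μ X := hμ.2.2 X
    · -- μ X ⊆ extC (graphOf μ) X
      have h1 : ecIter (graphOf μ) X 1 = X ∪ ⋃ p ∈ {q ∈ graphOf μ | q.1 ⊆ X}, p.2 := rfl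
      have : μ X ⊆ ecIter (graphOf μ) X 1 := by
        rw [h1]
        intro x hx
        apply mem_union_right
        simp only [mem_iUnion, mem_sep_iff, exists_prop]
        exact ⟨(X, μ X), ⟨rfl, subset_rfl⟩, hx⟩
      exact this.trans (subset_iUnion (ecIter (graphOf μ) X) 1)
  funext X
  apply Subset.antisymm
  · exact extC_mono_set (fun p hp => ⟨hα.1 hp.1, hp.2⟩)
  · refine iUnion_subset fun n => ?_
    induction n with
    | zero => exact subset_extC_s13
    | succ n ih =>
      rw [ecIter]
      apply union_subset ih
      refine iUnion₂_subset fun q hq => ?_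
      have hq2 : q.2 = μ q.1 := hq.1.1
      have hC' : μ q.1 ⊂ C := hq2 ▸ hq.1.2
      rw [hq2, ← core_extC μ hμ C α hα q.1 hC']
      calc extC {p ∈ α | p.2 ⊂ C} q.1
          ⊆ extC {p ∈ α | p.2 ⊂ C} (extC {p ∈ α | p.2 ⊂ C} X) :=
            extC_mono (hq.2.trans ih)
        _ = extC {p ∈ α | p.2 ⊂ C} X := extC_idem
end

section
/- Direct determination is transitive: if Xμ = Yμ = Zμ = C, Y ⊆ X(μ_{⊂C})⁺, and Z ⊆ Y(μ_{⊂C})⁺, then Z ⊆ X(μ_{⊂C})⁺. -/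
open Set

variable {U : Type*}

lemma ecIter_mono_n (α : Set (Set U × Set U)) (X : Set U) : Monotone (ecIter α X) := by
  apply monotone_nat_of_le_succ
  intro n
  exact subset_union_left

lemma finite_subset_iter {f : ℕ → Set U} (hf : Monotone f) {S : Set U} (hS : S.Finite)
    (h : S ⊆ ⋃ n, f n) : ∃ N, S ⊆ f N := by
  refine Set.Finite.induction_on (motive := fun s _ => s ⊆ ⋃ n, f n → ∃ N, s ⊆ f N) S hS (fun _ => ⟨0, empty_subset _⟩)
    (fun {a s} _ _ ih h => ?_) h
  obtain ⟨N, hN⟩ := ih (fun x hx => h (Set.mem_insert_of_mem _ hx))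
  obtain ⟨_, ⟨m, rfl⟩, hm⟩ := h (Set.mem_insert a s)
  exact ⟨max m N, Set.insert_subset (hf (le_max_left m N) hm)
    (hN.trans (hf (le_max_right m N)))⟩

lemma extC_trans_subset [Finite U] (α : Set (Set U × Set U)) {X Y : Set U}
    (hXY : Y ⊆ extC α X) : extC α Y ⊆ extC α X := by
  apply Set.iUnion_subset
  intro n
  induction n with
  | zero => exact hXY
  | succ n ih =>
      intro z hz
      rcases hz with hz | hz
      · exact ih hz
      · simp only [Set.mem_iUnion] at hz
        obtain ⟨p, ⟨hpα, hp1⟩, hzp⟩ := hz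
        obtain ⟨N, hN⟩ := finite_subset_iter (ecIter_mono_n α X) (Set.toFinite p.1)
          (hp1.trans ih)
        have : p.2 ⊆ ecIter α X (N + 1) := fun w hw =>
          Or.inr (by simp only [Set.mem_iUnion]; exact ⟨p, ⟨hpα, hN⟩, hw⟩)
        exact Set.mem_iUnion.2 ⟨N + 1, this hzp⟩

theorem directDetermination_trans [Finite U] (μ : Set U → Set U) (hμ : IsClosure μ)
    (C X Y Z : Set U) (hX : μ X = C) (hY : μ Y = C) (hZ : μ Z = C)
    (hXY : Y ⊆ extC {p ∈ graphOf μ | p.2 ⊂ C} X)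
    (hYZ : Z ⊆ extC {p ∈ graphOf μ | p.2 ⊂ C} Y) :
    Z ⊆ extC {p ∈ graphOf μ | p.2 ⊂ C} X := hYZ.trans (extC_trans_subset _ hXY)
end
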